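/- For quadratic forms over a field $k$ of characteristic not $2$: if the Pfister neighbor $\varphi = \langle\langle a_1, \ldots, a_{n-1}\rangle\rangle \perp \langle -a_n \rangle$ is isotropic over a field extension $F/k$, then the Pfister form $\langle\langle a_1, \ldots, a_n\rangle\rangle$ is hyperbolic over $F$, and conversely. -/

import Mathlib

/-- The `n`-fold Pfister form `⟨⟨a₁, …, aₙ⟩⟩ = ⊗ᵢ ⟨1, -aᵢ⟩` as a quadratic polynomial
function on the `2^n`-dimensional space `(Fin n → Bool) → k`, defined recursively by
`⟨⟨⟩⟩(x) = x²` and `⟨⟨a₀,…,aₙ⟩⟩ = ⟨⟨a₁,…,aₙ⟩⟩ ⊥ (-a₀)·⟨⟨a₁,…,aₙ⟩⟩`. -/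
def pfisterForm (k : Type*) [Field k] : ∀ n : ℕ, (Fin n → k) → ((Fin n → Bool) → k) → k
  | 0, _, x => (x (fun i => i.elim0)) ^ 2
  | n + 1, a, x =>
      pfisterForm k n (fun i => a i.succ) (fun s => x (Fin.cons false s)) -
        a 0 * pfisterForm k n (fun i => a i.succ) (fun s => x (Fin.cons true s))

/-- The Pfister neighbor `φ = ⟨⟨a₁, …, aₙ⟩⟩ ⊥ ⟨-a_{n+1}⟩` as a function on
`((Fin n → Bool) → k) × k`. -/
def pfisterNeighbor (k : Type*) [Field k] (n : ℕ) (a : Fin (n + 1) → k)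
    (x : ((Fin n → Bool) → k) × k) : k :=
  pfisterForm k n (fun i => a i.castSucc) x.1 - a (Fin.last n) * x.2 ^ 2

section Helpers

variable {F : Type*} [Field F]

/-- The diagonal coefficients of the Pfister form. -/
def pfC {n : ℕ} (a : Fin n → F) (s : Fin n → Bool) : F :=
  ∏ i, if s i then -a i else 1

theorem pfC_cons {n : ℕ} (a : Fin (n + 1) → F) (b : Bool) (s : Fin n → Bool) :
    pfC a (Fin.cons b s) = (if b then -a 0 else 1) * pfC (fun i => a i.succ) s := by
  simp [pfC, Fin.prod_univ_succ]

theorem pfC_snoc {n : ℕ} (a : Fin (n + 1) → F) (b : Bool) (s : Fin n → Bool) :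
    pfC a (Fin.snoc s b) = pfC (fun i => a i.castSucc) s * (if b then -a (Fin.last n) else 1) := by
  simp [pfC, Fin.prod_univ_castSucc]

/-- The Pfister form is the diagonal form with coefficients `pfC`. -/
theorem pf_sum : ∀ {n : ℕ} (a : Fin n → F) (x : (Fin n → Bool) → F),
    pfisterForm F n a x = ∑ s, pfC a s * x s ^ 2
  | 0, a, x => by
    rw [Fintype.sum_subsingleton _ (fun i => (i : Fin 0).elim0)]
    simp [pfisterForm, pfC]
  | (n + 1), a, x => by
    rw [show pfisterForm F (n + 1) a x =
        pfisterForm F n (fun i => a i.succ) (fun s => x (Fin.cons false s)) -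
          a 0 * pfisterForm F n (fun i => a i.succ) (fun s => x (Fin.cons true s)) from rfl]
    rw [pf_sum, pf_sum,
      ← Equiv.sum_comp (Fin.consEquiv (fun _ => Bool)) (fun s => pfC a s * x s ^ 2)]
    rw [Fintype.sum_prod_type, Fintype.sum_bool]
    have h1 : ∀ s : Fin n → Bool,
        pfC a (Fin.cons true s) * x (Fin.cons true s) ^ 2 =
          -(a 0 * (pfC (fun i => a i.succ) s * x (Fin.cons true s) ^ 2)) := fun s => by
      rw [pfC_cons]; norm_num; ring
    have h0 : ∀ s : Fin n → Bool,
        pfC a (Fin.cons false s) * x (Fin.cons false s) ^ 2 =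
          pfC (fun i => a i.succ) s * x (Fin.cons false s) ^ 2 := fun s => by
      rw [pfC_cons]; norm_num
    have hcons : ∀ (b : Bool) (s : Fin n → Bool),
        (Fin.consEquiv (fun _ => Bool)) (b, s) = Fin.cons b s := fun b s => rfl
    simp only [hcons, h1, h0, Finset.sum_neg_distrib, ← Finset.mul_sum]
    ring

theorem pf_zero {n : ℕ} (a : Fin n → F) : pfisterForm F n a 0 = 0 := by
  rw [pf_sum]; simp

theorem pf_smul {n : ℕ} (a : Fin n → F) (t : F) (x : (Fin n → Bool) → F) :
    pfisterForm F n a (t • x) = t ^ 2 * pfisterForm F n a x := by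
  rw [pf_sum, pf_sum, Finset.mul_sum]
  refine Finset.sum_congr rfl fun s _ => ?_
  simp only [Pi.smul_apply, smul_eq_mul]; ring

/-- The key "shear" identity used for roundness of Pfister forms. -/
theorem pf_shear {n : ℕ} (a : Fin n → F) (e : F) (x y : (Fin n → Bool) → F) :
    pfisterForm F n a (x + e • y) - e * pfisterForm F n a (x + y) =
      (1 - e) * (pfisterForm F n a x - e * pfisterForm F n a y) := by
  simp only [pf_sum, Finset.mul_sum, ← Finset.sum_sub_distrib]
  refine Finset.sum_congr rfl fun s _ => ?_
  simp only [Pi.add_apply, Pi.smul_apply, smul_eq_mul]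
  ring

/-- The Pfister form represents 1 (at the indicator of the all-`false` point). -/
theorem pf_repr_one {n : ℕ} (a : Fin n → F) :
    pfisterForm F n a (fun s => if s = (fun _ => false) then 1 else 0) = 1 := by
  rw [pf_sum, Finset.sum_eq_single (fun _ => false)]
  · simp [pfC]
  · intro b _ hb; simp [hb]
  · simp

theorem pf_indicator_ne_zero {n : ℕ} :
    (fun s : Fin n → Bool => if s = (fun _ => false) then (1 : F) else 0) ≠ 0 := by
  intro h
  have := congrFun h (fun _ => false)
  simp at this

/-- Splitting off the last index of a Pfister form space. -/
def pfSplit (F : Type*) [Field F] (n : ℕ) :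
    ((Fin (n + 1) → Bool) → F) ≃ₗ[F] ((Fin n → Bool) → F) × ((Fin n → Bool) → F) where
  toFun x := (fun s => x (Fin.snoc s false), fun s => x (Fin.snoc s true))
  invFun p s := if s (Fin.last n) then p.2 (Fin.init s) else p.1 (Fin.init s)
  map_add' x y := rfl
  map_smul' c x := rfl
  left_inv x := by
    funext s
    show (if s (Fin.last n) then x (Fin.snoc (Fin.init s) true)
      else x (Fin.snoc (Fin.init s) false)) = x s
    by_cases h : s (Fin.last n)
    · rw [if_pos h, show Fin.snoc (Fin.init s) true = s from by
        rw [show true = s (Fin.last n) from h.symm]; exact Fin.snoc_init_self s]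
    · rw [if_neg h, show Fin.snoc (Fin.init s) false = s from by
        rw [show false = s (Fin.last n) from (Bool.not_eq_true _ ▸ h : _ = false).symm]
        exact Fin.snoc_init_self s]
  right_inv p := by
    refine Prod.ext ?_ ?_ <;> funext s <;>
      simp [Fin.snoc_last, Fin.init_snoc]

theorem pfSplit_fst {n : ℕ} (x : (Fin (n + 1) → Bool) → F) :
    (pfSplit F n x).1 = fun s => x (Fin.snoc s false) := rfl

theorem pfSplit_snd {n : ℕ} (x : (Fin (n + 1) → Bool) → F) :
    (pfSplit F n x).2 = fun s => x (Fin.snoc s true) := rfl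

/-- Peeling off the *last* coefficient of a Pfister form. -/
theorem pf_snoc {n : ℕ} (a : Fin (n + 1) → F) (x : (Fin (n + 1) → Bool) → F) :
    pfisterForm F (n + 1) a x =
      pfisterForm F n (fun i => a i.castSucc) (pfSplit F n x).1 -
        a (Fin.last n) * pfisterForm F n (fun i => a i.castSucc) (pfSplit F n x).2 := by
  rw [pf_sum, pf_sum, pf_sum, pfSplit_fst, pfSplit_snd,
    ← Equiv.sum_comp (Fin.snocEquiv (fun _ => Bool)) (fun s => pfC a s * x s ^ 2)]
  rw [Fintype.sum_prod_type, Fintype.sum_bool]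
  have h1 : ∀ s : Fin n → Bool,
      pfC a (Fin.snoc s true) * x (Fin.snoc s true) ^ 2 =
        -(a (Fin.last n) * (pfC (fun i => a i.castSucc) s * x (Fin.snoc s true) ^ 2)) :=
    fun s => by rw [pfC_snoc]; norm_num; ring
  have h0 : ∀ s : Fin n → Bool,
      pfC a (Fin.snoc s false) * x (Fin.snoc s false) ^ 2 =
        pfC (fun i => a i.castSucc) s * x (Fin.snoc s false) ^ 2 :=
    fun s => by rw [pfC_snoc]; norm_num
  have hsnoc : ∀ (b : Bool) (s : Fin n → Bool),
      (Fin.snocEquiv (fun _ => Bool)) (b, s) = Fin.snoc s b := fun b s => rfl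
  simp only [hsnoc, h1, h0, Finset.sum_neg_distrib, ← Finset.mul_sum]
  ring

/-- Roundness of Pfister forms: every nonzero represented value is a similarity factor. -/
theorem pf_round : ∀ (n : ℕ) (a : Fin n → F) (c : F), c ≠ 0 →
    (∃ y, pfisterForm F n a y = c) →
    ∃ e : ((Fin n → Bool) → F) ≃ₗ[F] ((Fin n → Bool) → F),
      ∀ x, pfisterForm F n a (e x) = c * pfisterForm F n a x
  | 0, a, c, hc, ⟨y, hy⟩ => by
    simp only [pfisterForm] at hy
    set y₀ := y (fun i => (i : Fin 0).elim0) with hy₀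
    have h0 : y₀ ≠ 0 := by
      intro h; rw [h] at hy; simp at hy; exact hc hy.symm
    refine ⟨LinearEquiv.smulOfNeZero F _ y₀ h0, fun x => ?_⟩
    simp only [pfisterForm, LinearEquiv.smulOfNeZero_apply, Pi.smul_apply, Units.smul_def,
      Units.val_mk0, smul_eq_mul]
    rw [← hy]; ring
  | (n + 1), a, c, hc, ⟨y, hy⟩ => by
    set a' : Fin n → F := fun i => a i.castSucc with ha'
    set b : F := a (Fin.last n) with hb
    set P : ((Fin n → Bool) → F) → F := pfisterForm F n a' with hP
    have hPs : ∀ (t : F) (z : (Fin n → Bool) → F), P (t • z) = t ^ 2 * P z :=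
      fun t z => pf_smul a' t z
    have hPsh : ∀ (e : F) (z w : (Fin n → Bool) → F),
        P (z + e • w) - e * P (z + w) = (1 - e) * (P z - e * P w) :=
      fun e z w => pf_shear a' e z w
    have hdec : ∀ x, pfisterForm F (n + 1) a x =
        P ((pfSplit F n x).1) - b * P ((pfSplit F n x).2) := fun x => pf_snoc a x
    set u := (pfSplit F n y).1 with hu
    set v := (pfSplit F n y).2 with hv
    have hc' : P u - b * P v = c := by rw [← hdec]; exact hy
    -- it suffices to find a suitable equivalence of the product space
    suffices h : ∃ E : (((Fin n → Bool) → F) × ((Fin n → Bool) → F)) ≃ₗ[F]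
        (((Fin n → Bool) → F) × ((Fin n → Bool) → F)),
        ∀ p, P (E p).1 - b * P (E p).2 = c * (P p.1 - b * P p.2) by
      obtain ⟨E, hE⟩ := h
      refine ⟨(pfSplit F n).trans (E.trans (pfSplit F n).symm), fun x => ?_⟩
      rw [hdec, hdec]
      simp only [LinearEquiv.trans_apply, LinearEquiv.apply_symm_apply]
      exact hE (pfSplit F n x)
    by_cases h2 : P v = 0
    · -- second component represents zero: c = P u
      have hcu : P u = c := by rw [← hc', h2]; ring
      obtain ⟨e₁, he₁⟩ := pf_round n a' c hc ⟨u, hcu⟩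
      replace he₁ : ∀ z, P (e₁ z) = c * P z := he₁
      refine ⟨e₁.prodCongr e₁, fun p => ?_⟩
      simp only [LinearEquiv.prodCongr_apply]
      rw [he₁, he₁]; ring
    · by_cases h1 : P u = 0
      · -- c = -(b * P v)
        have hcv : c = -(b * P v) := by rw [← hc', h1]; ring
        have hbne : b ≠ 0 := by
          intro h; rw [h] at hcv; simp at hcv; exact hc hcv
        obtain ⟨e₂, he₂⟩ := pf_round n a' (P v) h2 ⟨v, rfl⟩
        replace he₂ : ∀ z, P (e₂ z) = P v * P z := he₂
        refine ⟨(e₂.prodCongr e₂).trans ((LinearEquiv.prodComm F _ _).trans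
          ((LinearEquiv.smulOfNeZero F _ b hbne).prodCongr (LinearEquiv.refl F _))), fun p => ?_⟩
        simp only [LinearEquiv.trans_apply, LinearEquiv.prodCongr_apply,
          LinearEquiv.prodComm_apply, Prod.swap, LinearEquiv.smulOfNeZero_apply,
          LinearEquiv.refl_apply, Units.smul_def, Units.val_mk0]
        rw [hPs, he₂, he₂, hcv]; ring
      · -- both nonzero
        obtain ⟨e₁, he₁⟩ := pf_round n a' (P u) h1 ⟨u, rfl⟩
        obtain ⟨e₂, he₂⟩ := pf_round n a' (P v) h2 ⟨v, rfl⟩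
        replace he₁ : ∀ z, P (e₁ z) = P u * P z := he₁
        replace he₂ : ∀ z, P (e₂ z) = P v * P z := he₂
        set e0 : F := b * P v / P u with he0
        have hd : 1 - e0 = c / P u := by
          rw [he0, ← hc']; field_simp
        have hdne : (1 : F) - e0 ≠ 0 := by
          rw [hd]; exact div_ne_zero hc h1
        -- the shear map T (u, v) = (u + e0 • v, u + v), invertible since 1 - e0 ≠ 0
        set Tl : (((Fin n → Bool) → F) × ((Fin n → Bool) → F)) →ₗ[F]
            (((Fin n → Bool) → F) × ((Fin n → Bool) → F)) :=
          LinearMap.prod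
            (LinearMap.fst F ((Fin n → Bool) → F) ((Fin n → Bool) → F) + e0 • LinearMap.snd F ((Fin n → Bool) → F) ((Fin n → Bool) → F))
            (LinearMap.fst F ((Fin n → Bool) → F) ((Fin n → Bool) → F) + LinearMap.snd F ((Fin n → Bool) → F) ((Fin n → Bool) → F)) with hTl
        have hTapp : ∀ p : ((Fin n → Bool) → F) × ((Fin n → Bool) → F), Tl p = (p.1 + e0 • p.2, p.1 + p.2) := fun p => rfl
        have hTinj : Function.Injective Tl := by
          rw [← LinearMap.ker_eq_bot]
          rw [Submodule.eq_bot_iff]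
          rintro ⟨p, q⟩ hpq
          rw [LinearMap.mem_ker, hTapp] at hpq
          have h1' : p + e0 • q = 0 := congrArg Prod.fst hpq
          have h2' : p + q = 0 := congrArg Prod.snd hpq
          have hq : (e0 - 1) • q = 0 := by
            have := sub_eq_zero.mpr (h1'.trans h2'.symm)
            rw [show p + e0 • q - (p + q) = (e0 - 1) • q by
              rw [sub_smul, one_smul]; abel] at this
            exact this
          have hq0 : q = 0 := by
            have : e0 - 1 ≠ 0 := by
              intro h
              apply hdne
              rw [show (1 : F) - e0 = -(e0 - 1) by ring, h, neg_zero]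
            exact (smul_eq_zero.mp hq).resolve_left this
          have hp0 : p = 0 := by rw [hq0, add_zero] at h2'; exact h2'
          simp [hp0, hq0]
        have hTsurj : Function.Surjective Tl :=
          (LinearMap.injective_iff_surjective).mp hTinj
        set T := LinearEquiv.ofBijective Tl ⟨hTinj, hTsurj⟩ with hT
        have hTe : ∀ p : ((Fin n → Bool) → F) × ((Fin n → Bool) → F), (T p : ((Fin n → Bool) → F) × ((Fin n → Bool) → F)) = (p.1 + e0 • p.2, p.1 + p.2) := fun p => rfl
        set S := e₁.prodCongr e₂ with hS
        -- ψ p = P p.1 - e0 * P p.2 satisfies Q (S p) = P u * ψ p and ψ (T p) = (1 - e0) ψ p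
        have hψT : ∀ p : ((Fin n → Bool) → F) × ((Fin n → Bool) → F), P (T p).1 - e0 * P (T p).2 =
            (1 - e0) * (P p.1 - e0 * P p.2) := fun p => by
          rw [hTe]; exact hPsh e0 p.1 p.2
        have hQS : ∀ p : ((Fin n → Bool) → F) × ((Fin n → Bool) → F), P (S p).1 - b * P (S p).2 =
            P u * (P p.1 - e0 * P p.2) := fun p => by
          simp only [hS, LinearEquiv.prodCongr_apply]
          rw [he₁, he₂, he0]; field_simp
        refine ⟨(e₁.prodCongr e₁).trans (S.symm.trans (T.trans S)), fun p => ?_⟩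
        simp only [LinearEquiv.trans_apply]
        rw [hQS, hψT]
        have hSsymm : ∀ q : ((Fin n → Bool) → F) × ((Fin n → Bool) → F), P (S.symm q).1 - e0 * P (S.symm q).2 =
            (P u)⁻¹ * (P (S (S.symm q)).1 - b * P (S (S.symm q)).2) := fun q => by
          rw [hQS]; field_simp
        rw [hSsymm]
        simp only [LinearEquiv.apply_symm_apply, LinearEquiv.prodCongr_apply]
        rw [he₁, he₁, hd]
        field_simp
termination_by n => n

/-- The anisotropic-base case of hyperbolicity: if the codimension-one Pfister factor is
anisotropic and the full form is isotropic, we get a totally isotropic half-space. -/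
theorem pf_hyp_aniso {n : ℕ} (a : Fin (n + 1) → F) (hb : a (Fin.last n) ≠ 0)
    (hani : ∀ z, pfisterForm F n (fun i => a i.castSucc) z = 0 → z = 0)
    (hiso : ∃ x, x ≠ 0 ∧ pfisterForm F (n + 1) a x = 0) :
    ∃ W : Submodule F ((Fin (n + 1) → Bool) → F),
      Module.finrank F W = 2 ^ n ∧ ∀ w ∈ W, pfisterForm F (n + 1) a w = 0 := by
  obtain ⟨x, hx0, hx⟩ := hiso
  have hrel : pfisterForm F n (fun i => a i.castSucc) ((pfSplit F n x).1)
      = a (Fin.last n) * pfisterForm F n (fun i => a i.castSucc) ((pfSplit F n x).2) := by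
    have h := pf_snoc a x
    rw [hx] at h
    exact sub_eq_zero.mp h.symm
  have hvne : (pfSplit F n x).2 ≠ 0 := by
    intro h
    have hPu : pfisterForm F n (fun i => a i.castSucc) ((pfSplit F n x).1) = 0 := by
      rw [hrel, h, pf_zero]; ring
    have hu0 : (pfSplit F n x).1 = 0 := hani _ hPu
    apply hx0
    have h2 : pfSplit F n x = 0 := Prod.ext hu0 h
    have h3 := congrArg (pfSplit F n).symm h2
    rwa [LinearEquiv.symm_apply_apply, map_zero] at h3
  have hPv : pfisterForm F n (fun i => a i.castSucc) ((pfSplit F n x).2) ≠ 0 :=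
    fun h => hvne (hani _ h)
  have hPu : pfisterForm F n (fun i => a i.castSucc) ((pfSplit F n x).1) ≠ 0 := by
    rw [hrel]; exact mul_ne_zero hb hPv
  -- the inverse of the last coefficient is represented by the subform
  obtain ⟨ec, hec⟩ := pf_round n (fun i => a i.castSucc) _ hPv ⟨(pfSplit F n x).2, rfl⟩
  have hw₁ : pfisterForm F n (fun i => a i.castSucc)
      (ec ((pfisterForm F n (fun i => a i.castSucc) ((pfSplit F n x).1))⁻¹ •
        (pfSplit F n x).1)) = (a (Fin.last n))⁻¹ := by
    rw [hec, pf_smul, hrel]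
    field_simp
  obtain ⟨e, he⟩ := pf_round n (fun i => a i.castSucc) (a (Fin.last n))⁻¹
    (inv_ne_zero hb) ⟨_, hw₁⟩
  -- W is the graph of e, transported back
  set g : ((Fin n → Bool) → F) →ₗ[F] (((Fin n → Bool) → F) × ((Fin n → Bool) → F)) :=
    LinearMap.prod LinearMap.id e.toLinearMap with hg
  have hgapp : ∀ z, g z = (z, e z) := fun z => rfl
  set L := (pfSplit F n).symm.toLinearMap ∘ₗ g with hL
  have hginj : Function.Injective g := by
    intro z z' hz
    have := congrArg Prod.fst hz
    rwa [hgapp, hgapp] at this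
  have hLinj : Function.Injective L := by
    rw [hL, LinearMap.coe_comp]
    exact Function.Injective.comp ((pfSplit F n).symm.injective) hginj
  refine ⟨LinearMap.range L, ?_, ?_⟩
  · rw [LinearMap.finrank_range_of_inj hLinj]
    rw [Module.finrank_pi F]
    simp [Fintype.card_fun]
  · rintro w ⟨z, rfl⟩
    rw [pf_snoc]
    have hspl : pfSplit F n (L z) = (z, e z) := by
      rw [hL]
      simp only [LinearMap.coe_comp, Function.comp_apply, LinearEquiv.coe_coe,
        LinearEquiv.apply_symm_apply]
      exact hgapp z
    rw [hspl, show ((z, e z) : ((Fin n → Bool) → F) × ((Fin n → Bool) → F)).1 = z from rfl,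
      show ((z, e z) : ((Fin n → Bool) → F) × ((Fin n → Bool) → F)).2 = e z from rfl, he]
    field_simp
    ring

/-- Isotropic Pfister forms are hyperbolic. -/
theorem pf_hyp (n : ℕ) : ∀ (a : Fin (n + 1) → F), (∀ i, a i ≠ 0) →
    (∃ x, x ≠ 0 ∧ pfisterForm F (n + 1) a x = 0) →
    ∃ W : Submodule F ((Fin (n + 1) → Bool) → F),
      Module.finrank F W = 2 ^ n ∧ ∀ w ∈ W, pfisterForm F (n + 1) a w = 0 := by
  induction n with
  | zero =>
    intro a ha hiso
    refine pf_hyp_aniso a (ha _) (fun z hz => ?_) hiso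
    simp only [pfisterForm] at hz
    have : z (fun i => (i : Fin 0).elim0) = 0 := by
      exact pow_eq_zero_iff (n := 2) (by norm_num) |>.mp hz
    funext s
    rw [Subsingleton.elim s (fun i => (i : Fin 0).elim0)]
    exact this
  | succ n IH =>
    intro a ha hiso
    by_cases hφ : ∃ z, z ≠ 0 ∧ pfisterForm F (n + 1) (fun i => a i.castSucc) z = 0
    · -- the subform is isotropic, hence hyperbolic by induction; take W' × W'
      obtain ⟨W', hW'rank, hW'iso⟩ := IH (fun i => a i.castSucc) (fun i => ha _) hφ
      set L := (pfSplit F (n + 1)).symm.toLinearMap ∘ₗ (W'.subtype.prodMap W'.subtype) with hL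
      have hLinj : Function.Injective L := by
        rw [hL, LinearMap.coe_comp]
        refine Function.Injective.comp ((pfSplit F (n + 1)).symm.injective) ?_
        rw [LinearMap.coe_prodMap]
        exact Function.Injective.prodMap W'.injective_subtype W'.injective_subtype
      refine ⟨LinearMap.range L, ?_, ?_⟩
      · rw [LinearMap.finrank_range_of_inj hLinj, Module.finrank_prod, hW'rank]
        ring
      · rintro w ⟨⟨z₁, z₂⟩, rfl⟩
        rw [pf_snoc]
        have hspl : pfSplit F (n + 1) (L (z₁, z₂)) =
            ((z₁ : (Fin (n + 1) → Bool) → F), (z₂ : (Fin (n + 1) → Bool) → F)) := by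
          rw [hL]
          simp only [LinearMap.coe_comp, Function.comp_apply, LinearEquiv.coe_coe,
            LinearEquiv.apply_symm_apply, LinearMap.prodMap_apply]
          rfl
        rw [hspl,
          show (((z₁ : (Fin (n + 1) → Bool) → F), (z₂ : (Fin (n + 1) → Bool) → F)) :
            ((Fin (n + 1) → Bool) → F) × ((Fin (n + 1) → Bool) → F)).1 = ↑z₁ from rfl,
          show (((z₁ : (Fin (n + 1) → Bool) → F), (z₂ : (Fin (n + 1) → Bool) → F)) :
            ((Fin (n + 1) → Bool) → F) × ((Fin (n + 1) → Bool) → F)).2 = ↑z₂ from rfl,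
          hW'iso z₁ z₁.2, hW'iso z₂ z₂.2]
        ring
    · push_neg at hφ
      exact pf_hyp_aniso a (ha _) (fun z hz => by
        by_contra h
        exact (hφ z h) hz) hiso

end Helpers

/-- Over a field `F` of characteristic `≠ 2` extending `k`, the Pfister neighbor
`⟨⟨a₁,…,aₙ⟩⟩ ⊥ ⟨-a_{n+1}⟩` is isotropic iff the Pfister form `⟨⟨a₁,…,a_{n+1}⟩⟩` is
hyperbolic (possesses a totally isotropic subspace of half the dimension). -/
theorem pfisterNeighbor_isotropic_iff_pfister_hyperbolic
    (k F : Type*) [Field k] [Field F] [Algebra k F] (hchar : (2 : k) ≠ 0)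
    (n : ℕ) (a : Fin (n + 1) → k) (ha : ∀ i, a i ≠ 0) :
    (∃ x : ((Fin n → Bool) → F) × F, x ≠ 0 ∧
        pfisterNeighbor F n (fun i => algebraMap k F (a i)) x = 0) ↔
      (∃ W : Submodule F ((Fin (n + 1) → Bool) → F),
        Module.finrank F W = 2 ^ n ∧
        ∀ w ∈ W, pfisterForm F (n + 1) (fun i => algebraMap k F (a i)) w = 0) := by
  set A : Fin (n + 1) → F := fun i => algebraMap k F (a i) with hA
  have hAne : ∀ i, A i ≠ 0 := fun i => by
    simp only [hA]
    exact (map_ne_zero_iff _ (algebraMap k F).injective).mpr (ha i)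
  set a' : Fin n → F := fun i => A i.castSucc with ha'
  set b : F := A (Fin.last n) with hb
  have hbne : b ≠ 0 := hAne _
  set P : ((Fin n → Bool) → F) → F := pfisterForm F n a' with hP
  constructor
  · rintro ⟨⟨y, t⟩, hx0, hx⟩
    have hx' : P y - b * t ^ 2 = 0 := hx
    apply pf_hyp n A hAne
    by_cases ht : t = 0
    · have hyne : y ≠ 0 := by
        intro h; exact hx0 (by rw [h, ht]; rfl)
      have hPy : P y = 0 := by rw [ht] at hx'; simpa using hx'
      refine ⟨(pfSplit F n).symm (y, 0), ?_, ?_⟩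
      · intro h
        have := congrArg (pfSplit F n) h
        rw [LinearEquiv.apply_symm_apply, map_zero] at this
        exact hyne (congrArg Prod.fst this)
      · rw [pf_snoc, LinearEquiv.apply_symm_apply,
          show ((y, (0 : (Fin n → Bool) → F)) :
            ((Fin n → Bool) → F) × ((Fin n → Bool) → F)).1 = y from rfl,
          show ((y, (0 : (Fin n → Bool) → F)) :
            ((Fin n → Bool) → F) × ((Fin n → Bool) → F)).2 = 0 from rfl,
          show pfisterForm F n (fun i => A i.castSucc) y = (0 : F) from hPy, pf_zero]
        ring
    · set e₀ : (Fin n → Bool) → F := fun s => if s = (fun _ => false) then 1 else 0 with he₀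
      have hPy2 : P y = b * t ^ 2 := by linear_combination hx'
      have hPy' : P (t⁻¹ • y) = b := by
        rw [hP, pf_smul, show pfisterForm F n a' y = P y from rfl, hPy2]
        field_simp
      refine ⟨(pfSplit F n).symm (t⁻¹ • y, e₀), ?_, ?_⟩
      · intro h
        have := congrArg (pfSplit F n) h
        rw [LinearEquiv.apply_symm_apply, map_zero] at this
        exact pf_indicator_ne_zero (congrArg Prod.snd this)
      · rw [pf_snoc, LinearEquiv.apply_symm_apply,
          show ((t⁻¹ • y, e₀) : ((Fin n → Bool) → F) × ((Fin n → Bool) → F)).1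
            = t⁻¹ • y from rfl,
          show ((t⁻¹ • y, e₀) : ((Fin n → Bool) → F) × ((Fin n → Bool) → F)).2
            = e₀ from rfl,
          show pfisterForm F n (fun i => A i.castSucc) (t⁻¹ • y) = b from hPy',
          show pfisterForm F n (fun i => A i.castSucc) e₀ = 1 from pf_repr_one a']
        ring
  · rintro ⟨W, hdim, hiso⟩
    have hWne : W ≠ ⊥ := by
      intro h
      rw [h, finrank_bot] at hdim
      exact (pow_ne_zero n two_ne_zero) hdim.symm
    obtain ⟨w, hwW, hw0⟩ := Submodule.exists_mem_ne_zero_of_ne_bot hWne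
    set u := (pfSplit F n w).1 with hu
    set v := (pfSplit F n w).2 with hv
    have hrel : P u = b * P v := by
      have h := pf_snoc A w
      rw [hiso w hwW] at h
      exact sub_eq_zero.mp h.symm
    by_cases hPv : P v = 0
    · by_cases hv0 : v = 0
      · have hune : u ≠ 0 := by
          intro h
          apply hw0
          have : pfSplit F n w = 0 := by
            have : pfSplit F n w = (u, v) := rfl
            rw [this, h, hv0]; rfl
          have := congrArg (pfSplit F n).symm this
          rwa [LinearEquiv.symm_apply_apply, map_zero] at this
        refine ⟨(u, 0), ?_, ?_⟩
        · intro h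
          exact hune (congrArg Prod.fst h)
        · show P u - b * (0 : F) ^ 2 = 0
          rw [hrel, hPv]; ring
      · refine ⟨(v, 0), ?_, ?_⟩
        · intro h
          exact hv0 (congrArg Prod.fst h)
        · show P v - b * (0 : F) ^ 2 = 0
          rw [hPv]; ring
    · have hPu : P u ≠ 0 := by rw [hrel]; exact mul_ne_zero hbne hPv
      obtain ⟨e, he⟩ := pf_round n a' (P u) hPu ⟨u, rfl⟩
      have hz : P (e ((P v)⁻¹ • v)) = b := by
        have he' : ∀ z, P (e z) = P u * P z := he
        have hsm : P ((P v)⁻¹ • v) = ((P v)⁻¹) ^ 2 * P v := by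
          rw [hP, pf_smul, show pfisterForm F n a' v = P v from rfl]
        rw [he', hsm, hrel]
        field_simp
      refine ⟨(e ((P v)⁻¹ • v), 1), ?_, ?_⟩
      · intro h
        have := congrArg Prod.snd h
        simp at this
      · show P (e ((P v)⁻¹ • v)) - b * (1 : F) ^ 2 = 0
        rw [hz]; ring
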